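/- Let a, b ∈ (0,∞) and let P be the product probability measure on ℝ³ whose three marginals are the exponential distributions with rates a, b, and a+b respectively. Let F : ℝ³ → ℝ³ be the map F(x,y,z) = (x − min(x,y) + z, y − min(x,y) + z, min(x,y)). Then P(F^{−1}(B)) = P(B) for every Borel set B ⊂ ℝ³; equivalently, the pushforward of P under F equals P. -/

import Mathlib

open MeasureTheory ProbabilityTheory Filter Set Topology
open scoped ENNReal

noncomputable section

namespace BurkeAux

open Real MeasureTheory

/-- The exponential pdf as a simple formula. -/
lemma expPDF_apply (r x : ℝ) :
    gammaPDF 1 r x = ENNReal.ofReal (if 0 ≤ x then r * Real.exp (-(r * x)) else 0) := by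
  unfold gammaPDF gammaPDFReal
  congr 1
  split_ifs with h
  · simp [Real.Gamma_one, Real.rpow_one, sub_self, Real.rpow_zero]
  · rfl

lemma exp_mul_helper (a b c A B C A' B' C' : ℝ) (h : A + B + C = A' + B' + C') :
    a * Real.exp A * (b * Real.exp B * (c * Real.exp C))
      = a * Real.exp A' * (b * Real.exp B' * (c * Real.exp C')) := by
  have key : Real.exp A * (Real.exp B * Real.exp C)
      = Real.exp A' * (Real.exp B' * Real.exp C') := by
    rw [← Real.exp_add, ← Real.exp_add, ← Real.exp_add, ← Real.exp_add]
    congr 1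
    linarith
  linear_combination (a * b * c) * key

/-- Pointwise invariance of the density under `F`. -/
lemma density_inv (a b : ℝ) (ha : 0 ≤ a) (hb : 0 ≤ b) (v : ℝ × ℝ × ℝ) :
    gammaPDF 1 a (v.1 - min v.1 v.2.1 + v.2.2)
        * (gammaPDF 1 b (v.2.1 - min v.1 v.2.1 + v.2.2)
          * gammaPDF 1 (a + b) (min v.1 v.2.1))
      = gammaPDF 1 a v.1 * (gammaPDF 1 b v.2.1 * gammaPDF 1 (a + b) v.2.2) := by
  obtain ⟨x, y, z⟩ := v
  simp only [expPDF_apply]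
  have hpos : ∀ r t : ℝ, 0 ≤ r → 0 ≤ (if 0 ≤ t then r * Real.exp (-(r * t)) else 0) := by
    intro r t hr; split_ifs with h
    · positivity
    · exact le_rfl
  rw [← ENNReal.ofReal_mul (hpos b _ hb), ← ENNReal.ofReal_mul (hpos a _ ha),
      ← ENNReal.ofReal_mul (hpos b _ hb), ← ENNReal.ofReal_mul (hpos a _ ha)]
  congr 1
  rcases le_total x y with h | h
  · rw [min_eq_left h]
    split_ifs <;>
      first
        | (exfalso; linarith)
        | (apply exp_mul_helper; ring)
        | ring
  · rw [min_eq_right h]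
    split_ifs <;>
      first
        | (exfalso; linarith)
        | (apply exp_mul_helper; ring)
        | ring

/-- Product of densities gives density of product measure. -/
lemma wd_prod {α β : Type*} [MeasurableSpace α] [MeasurableSpace β]
    (μ : Measure α) (ν : Measure β) [SigmaFinite μ] [SigmaFinite ν]
    {f : α → ℝ≥0∞} {g : β → ℝ≥0∞} (hf : Measurable f) (hg : Measurable g)
    [SigmaFinite (μ.withDensity f)] [SigmaFinite (ν.withDensity g)] :
    (μ.withDensity f).prod (ν.withDensity g)
      = (μ.prod ν).withDensity (fun p => f p.1 * g p.2) := by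
  refine Measure.prod_eq fun s t hs ht => ?_
  rw [withDensity_apply _ (hs.prod ht), ← Measure.prod_restrict,
    lintegral_prod_mul hf.aemeasurable hg.aemeasurable,
    withDensity_apply _ hs, withDensity_apply _ ht]

section MP

lemma mp_lift12 {B : ℝ × ℝ → ℝ × ℝ} (hB : MeasurePreserving B volume volume) :
    MeasurePreserving
      (fun v : ℝ × ℝ × ℝ => ((B (v.1, v.2.1)).1, (B (v.1, v.2.1)).2, v.2.2))
      volume volume := by
  have h1 : MeasurePreserving (MeasurableEquiv.prodAssoc.symm : ℝ × ℝ × ℝ ≃ᵐ (ℝ × ℝ) × ℝ)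
      volume volume :=
    (volume_preserving_prodAssoc (α₁ := ℝ) (β₁ := ℝ) (γ₁ := ℝ)).symm _
  have h2 : MeasurePreserving (Prod.map B (id : ℝ → ℝ))
      ((volume : Measure (ℝ × ℝ)).prod (volume : Measure ℝ))
      ((volume : Measure (ℝ × ℝ)).prod (volume : Measure ℝ)) :=
    hB.prod (MeasurePreserving.id volume)
  have h3 : MeasurePreserving (MeasurableEquiv.prodAssoc : (ℝ × ℝ) × ℝ ≃ᵐ ℝ × ℝ × ℝ)
      volume volume := volume_preserving_prodAssoc
  exact (h3.comp h2).comp h1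

lemma mp_lift23 {B : ℝ × ℝ → ℝ × ℝ} (hB : MeasurePreserving B volume volume) :
    MeasurePreserving (fun v : ℝ × ℝ × ℝ => (v.1, B v.2)) volume volume :=
  (MeasurePreserving.id (volume : Measure ℝ)).prod hB

lemma mp_s12 : MeasurePreserving (fun v : ℝ × ℝ × ℝ => (v.2.1, v.1, v.2.2))
    volume volume :=
  mp_lift12 (Measure.measurePreserving_swap (μ := (volume : Measure ℝ)) (ν := (volume : Measure ℝ)))

lemma mp_s23 : MeasurePreserving (fun v : ℝ × ℝ × ℝ => (v.1, v.2.2, v.2.1))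
    volume volume :=
  mp_lift23 (Measure.measurePreserving_swap (μ := (volume : Measure ℝ)) (ν := (volume : Measure ℝ)))

lemma mp_s13 : MeasurePreserving (fun v : ℝ × ℝ × ℝ => (v.2.2, v.2.1, v.1))
    volume volume :=
  mp_s23.comp (mp_s12.comp mp_s23)

/-- The linear branch of `F` on `{x ≤ y}`: `(x,y,z) ↦ (z, y - x + z, x)`. -/
lemma mp_L1 : MeasurePreserving
    (fun v : ℝ × ℝ × ℝ => (v.2.2, v.2.1 - v.1 + v.2.2, v.1)) volume volume := by
  have h1 := mp_lift12 (measurePreserving_prod_sub (volume : Measure ℝ) volume)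
  have h3 := mp_lift12 (measurePreserving_prod_add_right (volume : Measure ℝ) volume)
  exact (h3.comp mp_s13).comp h1

/-- The linear branch of `F` on `{x > y}`: `(x,y,z) ↦ (x - y + z, z, y)`. -/
lemma mp_L2 : MeasurePreserving
    (fun v : ℝ × ℝ × ℝ => (v.1 - v.2.1 + v.2.2, v.2.2, v.2.1)) volume volume := by
  have h1 := mp_lift12 (measurePreserving_sub_prod (volume : Measure ℝ) volume)
  have h3 := mp_lift12 (measurePreserving_add_prod (volume : Measure ℝ) volume)
  exact (h3.comp mp_s23).comp h1

end MP

end BurkeAux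

open BurkeAux

/-- Let `P` be the product measure on `ℝ³` whose marginals are exponential
with rates `a`, `b` and `a+b`, and let `F(x,y,z) = (x − x∧y + z, y − x∧y + z, x∧y)`.
Then `P(F⁻¹(B)) = P(B)` for every Borel `B`; equivalently, `map F P = P`. -/
theorem exponential_burke_invariance
    (a b : ℝ) (ha : 0 < a) (hb : 0 < b)
    (P : Measure (ℝ × ℝ × ℝ))
    (hP : P = (expMeasure a).prod ((expMeasure b).prod (expMeasure (a + b))))
    (F : ℝ × ℝ × ℝ → ℝ × ℝ × ℝ)
    (hF : F = fun v =>
      (v.1 - min v.1 v.2.1 + v.2.2, v.2.1 - min v.1 v.2.1 + v.2.2, min v.1 v.2.1)) :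
    (∀ B : Set (ℝ × ℝ × ℝ), MeasurableSet B → P (F ⁻¹' B) = P B) ∧
      Measure.map F P = P := by
  have hc : 0 < a + b := by linarith
  -- measurability
  have hFm : Measurable F := by
    subst hF
    fun_prop
  -- the density
  set f : ℝ × ℝ × ℝ → ℝ≥0∞ :=
    fun v => gammaPDF 1 a v.1 * (gammaPDF 1 b v.2.1 * gammaPDF 1 (a + b) v.2.2) with hf_def
  have hmA : Measurable (gammaPDF 1 a) := (measurable_gammaPDFReal 1 a).ennreal_ofReal
  have hmB : Measurable (gammaPDF 1 b) := (measurable_gammaPDFReal 1 b).ennreal_ofReal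
  have hmC : Measurable (gammaPDF 1 (a + b)) :=
    (measurable_gammaPDFReal 1 (a + b)).ennreal_ofReal
  have hmf : Measurable f := by
    apply (hmA.comp measurable_fst).mul
    exact (hmB.comp (measurable_fst.comp measurable_snd)).mul
      (hmC.comp (measurable_snd.comp measurable_snd))
  -- P as a density w.r.t. Lebesgue
  haveI hPMa : IsProbabilityMeasure ((volume : Measure ℝ).withDensity (gammaPDF 1 a)) :=
    isProbabilityMeasure_gammaMeasure zero_lt_one ha
  haveI hPMb : IsProbabilityMeasure ((volume : Measure ℝ).withDensity (gammaPDF 1 b)) :=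
    isProbabilityMeasure_gammaMeasure zero_lt_one hb
  haveI hPMc : IsProbabilityMeasure ((volume : Measure ℝ).withDensity (gammaPDF 1 (a + b))) :=
    isProbabilityMeasure_gammaMeasure zero_lt_one hc
  have hbc : (expMeasure b).prod (expMeasure (a + b))
      = ((volume : Measure ℝ).prod (volume : Measure ℝ)).withDensity
          (fun p => gammaPDF 1 b p.1 * gammaPDF 1 (a + b) p.2) :=
    wd_prod volume volume hmB hmC
  haveI : IsProbabilityMeasure
      (((volume : Measure ℝ).prod (volume : Measure ℝ)).withDensity
        (fun p => gammaPDF 1 b p.1 * gammaPDF 1 (a + b) p.2)) := by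
    rw [← hbc]
    have : IsProbabilityMeasure (expMeasure b) := hPMb
    have : IsProbabilityMeasure (expMeasure (a + b)) := hPMc
    infer_instance
  have hPd : P = (volume : Measure (ℝ × ℝ × ℝ)).withDensity f := by
    rw [hP]
    have h2 : (expMeasure a).prod ((expMeasure b).prod (expMeasure (a + b)))
        = ((volume : Measure ℝ).prod
            ((volume : Measure ℝ).prod (volume : Measure ℝ))).withDensity
          (fun v => gammaPDF 1 a v.1 *
            (gammaPDF 1 b v.2.1 * gammaPDF 1 (a + b) v.2.2)) := by
      rw [show (expMeasure b).prod (expMeasure (a + b))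
          = ((volume : Measure ℝ).prod (volume : Measure ℝ)).withDensity
              (fun p => gammaPDF 1 b p.1 * gammaPDF 1 (a + b) p.2) from hbc]
      exact wd_prod volume _ hmA
        ((hmB.comp measurable_fst).mul (hmC.comp measurable_snd))
    exact h2
  -- volume is invariant under F
  set S : Set (ℝ × ℝ × ℝ) := {v | v.1 ≤ v.2.1} with hS_def
  have hSm : MeasurableSet S :=
    measurableSet_le measurable_fst (measurable_fst.comp measurable_snd)
  have hmapvol : Measure.map F (volume : Measure (ℝ × ℝ × ℝ)) = volume := by
    have e1 : Measure.map F (volume.restrict S)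
        = Measure.map (fun v : ℝ × ℝ × ℝ => (v.2.2, v.2.1 - v.1 + v.2.2, v.1))
            (volume.restrict S) := by
      refine Measure.map_congr ?_
      filter_upwards [ae_restrict_mem hSm] with v hv
      subst hF
      have : min v.1 v.2.1 = v.1 := min_eq_left hv
      simp only [this]
      rw [show v.1 - v.1 + v.2.2 = v.2.2 from by ring]
    have e2 : Measure.map F (volume.restrict Sᶜ)
        = Measure.map (fun v : ℝ × ℝ × ℝ => (v.1 - v.2.1 + v.2.2, v.2.2, v.2.1))
            (volume.restrict Sᶜ) := by
      refine Measure.map_congr ?_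
      filter_upwards [ae_restrict_mem hSm.compl] with v hv
      subst hF
      have hv' : v.2.1 < v.1 := not_le.mp hv
      have : min v.1 v.2.1 = v.2.1 := min_eq_right hv'.le
      simp only [this]
      rw [show v.2.1 - v.2.1 + v.2.2 = v.2.2 from by ring]
    have hpre1 : (fun v : ℝ × ℝ × ℝ => (v.2.2, v.2.1 - v.1 + v.2.2, v.1)) ⁻¹' S = S := by
      ext v
      simp only [hS_def, mem_preimage, mem_setOf_eq]
      constructor <;> intro h <;> linarith
    have hpre2 : (fun v : ℝ × ℝ × ℝ => (v.1 - v.2.1 + v.2.2, v.2.2, v.2.1)) ⁻¹' Sᶜ = Sᶜ := by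
      ext v
      simp only [hS_def, mem_preimage, mem_compl_iff, mem_setOf_eq, not_le]
      constructor <;> intro h <;> linarith
    have r1 : Measure.map (fun v : ℝ × ℝ × ℝ => (v.2.2, v.2.1 - v.1 + v.2.2, v.1))
        (volume.restrict S) = volume.restrict S := by
      conv_lhs => rw [← hpre1]
      rw [← Measure.restrict_map mp_L1.measurable hSm, mp_L1.map_eq]
    have r2 : Measure.map (fun v : ℝ × ℝ × ℝ => (v.1 - v.2.1 + v.2.2, v.2.2, v.2.1))
        (volume.restrict Sᶜ) = volume.restrict Sᶜ := by
      conv_lhs => rw [← hpre2]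
      rw [← Measure.restrict_map mp_L2.measurable hSm.compl, mp_L2.map_eq]
    conv_lhs => rw [← Measure.restrict_add_restrict_compl (μ := volume) hSm,
      Measure.map_add _ _ hFm]
    rw [e1, e2, r1, r2, Measure.restrict_add_restrict_compl hSm]
  -- invariance of the density
  have hfF : ∀ v, f (F v) = f v := by
    intro v
    subst hF
    exact density_inv a b ha.le hb.le v
  -- conclusion
  have hmapP : Measure.map F P = P := by
    refine Measure.ext fun B hB => ?_
    rw [Measure.map_apply hFm hB, hPd, withDensity_apply _ (hFm hB), withDensity_apply _ hB]
    calc ∫⁻ v in F ⁻¹' B, f v ∂volume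
        = ∫⁻ v in F ⁻¹' B, f (F v) ∂volume := by
          refine setLIntegral_congr_fun (hFm hB) (fun v _ => (hfF v).symm)
      _ = ∫⁻ v in B, f v ∂(Measure.map F volume) := (setLIntegral_map hB hmf hFm).symm
      _ = ∫⁻ v in B, f v ∂volume := by rw [hmapvol]
  exact ⟨fun B hB => by rw [← Measure.map_apply hFm hB, hmapP], hmapP⟩
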